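/- For a 3×3 traceless symmetric real matrix M, setting y = tr(M²) and z = tr(M³), the characteristic polynomial of M is x³ − (y/2)·x − (z/3); moreover if y > 0 then the quantity ζ = z²/y³ satisfies 0 ≤ ζ ≤ 1/6. -/
import Mathlib


open Matrix Polynomial

section Aux

variable {n R : Type*} [Fintype n] [DecidableEq n] [CommRing R]

lemma my_charmatrix_conj (U V A : Matrix n n R) (hUV : U * V = 1) :
    charmatrix (U * A * V) = U.map C * charmatrix A * V.map C := by
  have hmap : ∀ (B C' : Matrix n n R), (B * C').map (Polynomial.C : R →+* R[X]) =
      B.map Polynomial.C * C'.map Polynomial.C := fun B C' => by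
    simpa [RingHom.mapMatrix_apply] using (Polynomial.C.mapMatrix (n := n)).map_mul B C'
  have hcomm : U.map (Polynomial.C : R → R[X]) * Matrix.scalar n (X : R[X]) =
      Matrix.scalar n (X : R[X]) * U.map Polynomial.C :=
    ((Matrix.scalar_commute (X : R[X]) (fun r => Commute.all _ _) _).symm).eq
  unfold charmatrix
  rw [RingHom.mapMatrix_apply, RingHom.mapMatrix_apply, mul_sub, sub_mul]
  congr 1
  · rw [hcomm, mul_assoc, ← hmap, hUV]
    simp
  · rw [← hmap, ← hmap]

lemma my_charpoly_conj (U V A : Matrix n n R) (hUV : U * V = 1) :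
    (U * A * V).charpoly = A.charpoly := by
  have h := my_charmatrix_conj U V A hUV
  have hdet : (U.map (Polynomial.C : R → R[X])).det * (V.map Polynomial.C).det = 1 := by
    have : (U * V).map (Polynomial.C : R →+* R[X]) = U.map Polynomial.C * V.map Polynomial.C := by
      simpa [RingHom.mapMatrix_apply] using (Polynomial.C.mapMatrix (n := n)).map_mul U V
    rw [← Matrix.det_mul, ← this, hUV]
    simp [Matrix.map_one]
  calc (U * A * V).charpoly = ((U.map Polynomial.C) * charmatrix A * (V.map Polynomial.C)).det := by
        rw [Matrix.charpoly, h]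
    _ = A.charpoly := by
        rw [Matrix.det_mul, Matrix.det_mul, Matrix.charpoly, mul_right_comm, hdet, one_mul]

lemma my_charpoly_diagonal (v : n → R) :
    (Matrix.diagonal v).charpoly = ∏ i, (X - C (v i)) := by
  have h : charmatrix (Matrix.diagonal v) = Matrix.diagonal fun i => (X : R[X]) - C (v i) := by
    ext i j
    by_cases hij : i = j
    · subst hij; simp
    · simp [hij, Matrix.diagonal_apply_ne _ hij]
  rw [Matrix.charpoly, h, Matrix.det_diagonal]

end Aux

/-- For a traceless symmetric real 3×3 matrix `M`, with `y = tr (M²)` and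
`z = tr (M³)`, the characteristic polynomial of `M` is `x³ − (y/2)·x − (z/3)`; moreover if
`y > 0` then `ζ = z²/y³` satisfies `0 ≤ ζ ≤ 1/6`. -/
theorem traceless_symm_charpoly_and_zeta_bound
    (M : Matrix (Fin 3) (Fin 3) ℝ) (hM : M.IsSymm) (htr : M.trace = 0)
    (y z : ℝ) (hy : y = (M ^ 2).trace) (hz : z = (M ^ 3).trace) :
    M.charpoly = X ^ 3 - C (y / 2) * X - C (z / 3) ∧
    (0 < y → 0 ≤ z ^ 2 / y ^ 3 ∧ z ^ 2 / y ^ 3 ≤ 1 / 6) := by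
  have hH : M.IsHermitian := by
    rw [Matrix.IsHermitian, Matrix.conjTranspose_eq_transpose_of_trivial]; exact hM
  set U : Matrix (Fin 3) (Fin 3) ℝ := (Matrix.IsHermitian.eigenvectorUnitary hH : Matrix (Fin 3) (Fin 3) ℝ) with hU
  set e : Fin 3 → ℝ := hH.eigenvalues with he
  have hUV : U * star U = 1 := Matrix.mem_unitaryGroup_iff.mp (Matrix.IsHermitian.eigenvectorUnitary hH).2
  have hVU : star U * U = 1 := Matrix.mem_unitaryGroup_iff'.mp (Matrix.IsHermitian.eigenvectorUnitary hH).2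
  have hspec : M = U * Matrix.diagonal e * star U := by
    have := hH.spectral_theorem
    simpa [he, hU, Function.comp] using this
  -- traces of powers
  have hpow : ∀ k : ℕ, (M ^ k).trace = ∑ i, (e i) ^ k := by
    intro k
    have hMk : M ^ k = U * (Matrix.diagonal e) ^ k * star U := by
      induction k with
      | zero => rw [pow_zero, pow_zero, Matrix.mul_one, hUV]
      | succ k ih =>
        rw [pow_succ, pow_succ, ih, hspec]
        calc U * Matrix.diagonal e ^ k * star U * (U * Matrix.diagonal e * star U)
            = U * Matrix.diagonal e ^ k * (star U * U) * Matrix.diagonal e * star U := by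
              simp only [Matrix.mul_assoc]
          _ = U * (Matrix.diagonal e ^ k * Matrix.diagonal e) * star U := by
              rw [hVU]; simp only [Matrix.mul_assoc, Matrix.one_mul]
    rw [hMk, Matrix.trace_mul_cycle, hVU, Matrix.one_mul,
      Matrix.diagonal_pow, Matrix.trace_diagonal]
    simp only [Pi.pow_apply]
  -- eigenvalue sums
  have hs1 : e 0 + e 1 + e 2 = 0 := by
    have h1 := hpow 1
    rw [pow_one, htr, Fin.sum_univ_three] at h1
    simp only [pow_one] at h1
    linarith
  have hs2 : e 0 ^ 2 + e 1 ^ 2 + e 2 ^ 2 = y := by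
    have := hpow 2; rw [hy, this, Fin.sum_univ_three]
  have hs3 : e 0 ^ 3 + e 1 ^ 3 + e 2 ^ 3 = z := by
    have := hpow 3; rw [hz, this, Fin.sum_univ_three]
  constructor
  · -- charpoly
    have hcp : M.charpoly = (Matrix.diagonal e).charpoly := by
      rw [hspec]
      exact my_charpoly_conj U (star U) (Matrix.diagonal e) hUV
    rw [hcp, my_charpoly_diagonal, Fin.prod_univ_three]
    have h2 : e 0 * e 1 + e 1 * e 2 + e 2 * e 0 = -(y / 2) := by nlinarith [hs1, hs2]
    have h3 : e 0 * e 1 * e 2 = z / 3 := by nlinarith [hs1, hs2, hs3]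
    have hc1 : (C (e 0) + C (e 1) + C (e 2) : ℝ[X]) = 0 := by
      rw [← map_add, ← map_add, hs1, map_zero]
    have hc2 : (C (e 0) * C (e 1) + C (e 1) * C (e 2) + C (e 2) * C (e 0) : ℝ[X]) = -C (y / 2) := by
      rw [← C_mul, ← C_mul, ← C_mul, ← C_add, ← C_add, h2, C_neg]
    have hc3 : (C (e 0) * C (e 1) * C (e 2) : ℝ[X]) = C (z / 3) := by
      rw [← C_mul, ← C_mul, h3]
    linear_combination (-(X:ℝ[X])^2) * hc1 + (X:ℝ[X]) * hc2 - hc3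
  · -- inequality
    intro hy0
    have hy3 : (0:ℝ) < y ^ 3 := by positivity
    constructor
    · positivity
    · rw [div_le_div_iff₀ hy3 (by norm_num)]
      have hc : e 2 = -e 0 - e 1 := by linarith
      rw [hc] at hs2 hs3
      have hY : y = 2*(e 0^2 + e 0*e 1 + e 1^2) := by linear_combination -hs2
      have hZ : z = -3*(e 0)*(e 1)*(e 0 + e 1) := by linear_combination -hs3
      rw [hY, hZ]
      nlinarith [mul_nonneg (sq_nonneg (e 0 - e 1)) (sq_nonneg (2*(e 0)^2 + 5*(e 0)*(e 1) + 2*(e 1)^2))]
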